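/- Let u : (εℤ)^d → ℂ be an element of ℓ¹, and define v(ξ) = (2π)^{−d/2} Σ_{y∈(εℤ)^d} e^{i ξ·y/ε} u(y) for ξ ∈ [−π,π]^d. If moreover Δ_ε^N u ∈ ℓ¹ for some N ∈ ℕ, then for all ξ with |ξ| ≥ ε^s (0 < s) one has |v(ξ)| ≤ (π²/(2ε^{2s}))^N (2π)^{−d/2} Σ_{x∈(εℤ)^d} |Δ_ε^N u(x)|, where Δ_ε is the discrete Laplacian Δ_ε u(x) = Σ_ν (u(x+εe_ν) + u(x−εe_ν)) − 2d u(x). -/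

import Mathlib

open Real

/-- The discrete Laplacian on lattice functions `u : ℤ^d → ℂ`. -/
noncomputable def latDiscLap {d : ℕ} (u : (Fin d → ℤ) → ℂ) (x : Fin d → ℤ) : ℂ :=
  (∑ ν, (u (x + Pi.single ν 1) + u (x - Pi.single ν 1))) - 2 * d * u x


noncomputable def phaseFn {d : ℕ} (ξ : Fin d → ℝ) (y : Fin d → ℤ) : ℂ :=
  Complex.exp (Complex.I * ∑ i, (ξ i : ℂ) * (y i : ℂ))

lemma phaseFn_add {d : ℕ} (ξ : Fin d → ℝ) (y : Fin d → ℤ) (ν : Fin d) :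
    phaseFn ξ (y + Pi.single ν 1) = phaseFn ξ y * Complex.exp (Complex.I * ξ ν) := by
  rw [phaseFn, phaseFn, ← Complex.exp_add]
  congr 1
  have h : ∀ i, (((y + Pi.single ν 1 : Fin d → ℤ) i : ℤ) : ℂ)
      = (y i : ℂ) + if i = ν then 1 else 0 := by
    intro i
    by_cases hi : i = ν <;> simp [Pi.single_apply, hi]
  simp only [h, mul_add, Finset.sum_add_distrib, mul_ite, mul_one, mul_zero,
    Finset.sum_ite_eq', Finset.mem_univ, if_true]

lemma phaseFn_sub {d : ℕ} (ξ : Fin d → ℝ) (y : Fin d → ℤ) (ν : Fin d) :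
    phaseFn ξ (y - Pi.single ν 1) = phaseFn ξ y * Complex.exp (-(Complex.I * ξ ν)) := by
  have := phaseFn_add ξ (y - Pi.single ν 1) ν
  rw [sub_add_cancel] at this
  rw [this, mul_assoc, ← Complex.exp_add]
  simp

lemma norm_phaseFn {d : ℕ} (ξ : Fin d → ℝ) (y : Fin d → ℤ) : ‖phaseFn ξ y‖ = 1 := by
  rw [phaseFn]
  have h : (∑ i, (ξ i : ℂ) * (y i : ℂ)) = ((∑ i, ξ i * (y i : ℝ) : ℝ) : ℂ) := by
    push_cast; ring
  rw [h, Complex.norm_exp]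
  simp


lemma summable_shift {d : ℕ} {w : (Fin d → ℤ) → ℂ} (hw : Summable fun x => ‖w x‖)
    (a : Fin d → ℤ) : Summable fun x => ‖w (x + a)‖ :=
  hw.comp_injective (add_left_injective a)

lemma summable_shift' {d : ℕ} {w : (Fin d → ℤ) → ℂ} (hw : Summable fun x => ‖w x‖)
    (a : Fin d → ℤ) : Summable fun x => ‖w (x - a)‖ :=
  hw.comp_injective (sub_left_injective)

lemma summable_lap {d : ℕ} {w : (Fin d → ℤ) → ℂ} (hw : Summable fun x => ‖w x‖) :
    Summable fun x => ‖latDiscLap w x‖ := by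
  have hb : Summable fun x => (∑ ν : Fin d, (‖w (x + Pi.single ν 1)‖ + ‖w (x - Pi.single ν 1)‖))
      + 2 * d * ‖w x‖ := by
    apply Summable.add
    · exact summable_sum fun ν _ => (summable_shift hw _).add (summable_shift' hw _)
    · exact hw.mul_left _
  refine hb.of_nonneg_of_le (fun x => norm_nonneg _) fun x => ?_
  rw [latDiscLap]
  refine (norm_sub_le _ _).trans (add_le_add ?_ ?_)
  · exact (norm_sum_le _ _).trans (Finset.sum_le_sum fun ν _ => norm_add_le _ _)
  · rw [norm_mul, norm_mul]
    simp [Complex.norm_natCast]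

lemma summable_phase_mul {d : ℕ} (ξ : Fin d → ℝ) {w : (Fin d → ℤ) → ℂ}
    (hw : Summable fun x => ‖w x‖) : Summable fun y => phaseFn ξ y * w y := by
  apply Summable.of_norm
  simp only [norm_mul, norm_phaseFn, one_mul]
  exact hw

lemma tsum_shift_add {d : ℕ} (ξ : Fin d → ℝ) (w : (Fin d → ℤ) → ℂ) (ν : Fin d) :
    ∑' y, phaseFn ξ y * w (y + Pi.single ν 1)
      = Complex.exp (-(Complex.I * ξ ν)) * ∑' y, phaseFn ξ y * w y := by
  have h : ∀ y : Fin d → ℤ, phaseFn ξ y * w (y + Pi.single ν 1)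
      = Complex.exp (-(Complex.I * ξ ν))
        * (phaseFn ξ (y + Pi.single ν 1) * w (y + Pi.single ν 1)) := by
    intro y
    rw [phaseFn_add, Complex.exp_neg]
    field_simp [Complex.exp_ne_zero]
    try ring
  rw [tsum_congr h, tsum_mul_left]
  congr 1
  exact Equiv.tsum_eq (Equiv.addRight (Pi.single ν 1)) fun z => phaseFn ξ z * w z

lemma tsum_shift_sub {d : ℕ} (ξ : Fin d → ℝ) (w : (Fin d → ℤ) → ℂ) (ν : Fin d) :
    ∑' y, phaseFn ξ y * w (y - Pi.single ν 1)
      = Complex.exp (Complex.I * ξ ν) * ∑' y, phaseFn ξ y * w y := by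
  have h : ∀ y : Fin d → ℤ, phaseFn ξ y * w (y - Pi.single ν 1)
      = Complex.exp (Complex.I * ξ ν)
        * (phaseFn ξ (y - Pi.single ν 1) * w (y - Pi.single ν 1)) := by
    intro y
    rw [phaseFn_sub, Complex.exp_neg]
    field_simp [Complex.exp_ne_zero]
    try ring
  rw [tsum_congr h, tsum_mul_left]
  congr 1
  exact Equiv.tsum_eq (Equiv.subRight (Pi.single ν 1)) fun z => phaseFn ξ z * w z

lemma sbp {d : ℕ} (ξ : Fin d → ℝ) {w : (Fin d → ℤ) → ℂ}
    (hw : Summable fun x => ‖w x‖) :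
    ∑' y, phaseFn ξ y * latDiscLap w y
      = -((∑ ν, (2 - 2 * Real.cos (ξ ν)) : ℝ) : ℂ) * ∑' y, phaseFn ξ y * w y := by
  have hs0 : Summable fun y => phaseFn ξ y * w y := summable_phase_mul ξ hw
  have hsp : ∀ ν : Fin d, Summable fun y => phaseFn ξ y * w (y + Pi.single ν 1) :=
    fun ν => summable_phase_mul ξ (summable_shift hw _)
  have hsm : ∀ ν : Fin d, Summable fun y => phaseFn ξ y * w (y - Pi.single ν 1) :=
    fun ν => summable_phase_mul ξ (summable_shift' hw _)
  have h1 : ∀ y : Fin d → ℤ, phaseFn ξ y * latDiscLap w y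
      = (∑ ν, (phaseFn ξ y * w (y + Pi.single ν 1) + phaseFn ξ y * w (y - Pi.single ν 1)))
        - (2 * d) * (phaseFn ξ y * w y) := by
    intro y
    rw [latDiscLap, mul_sub, Finset.mul_sum]
    simp only [mul_add]
    ring
  rw [tsum_congr h1, Summable.tsum_sub (summable_sum fun ν _ => (hsp ν).add (hsm ν)) (hs0.mul_left _),
    Summable.tsum_finsetSum (fun ν _ => (hsp ν).add (hsm ν)), tsum_mul_left]
  have h2 : ∀ ν : Fin d, ∑' y, (phaseFn ξ y * w (y + Pi.single ν 1)
        + phaseFn ξ y * w (y - Pi.single ν 1))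
      = ((2 * Real.cos (ξ ν) : ℝ) : ℂ) * ∑' y, phaseFn ξ y * w y := by
    intro ν
    rw [Summable.tsum_add (hsp ν) (hsm ν), tsum_shift_add, tsum_shift_sub, ← add_mul]
    congr 1
    rw [mul_comm Complex.I, ← neg_mul, Complex.exp_mul_I, Complex.exp_mul_I]
    push_cast [Complex.ofReal_cos]
    simp [Complex.cos_neg, Complex.sin_neg]
    ring
  rw [Finset.sum_congr rfl fun ν _ => h2 ν, ← Finset.sum_mul, ← sub_mul]
  congr 1
  push_cast
  simp [Finset.sum_const, Finset.card_univ, nsmul_eq_mul]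
  ring


/-- Discrete non-stationary-phase estimate: for `|ξ| ≥ ε^s`, `ξ ∈ [−π,π]^d`, the
lattice Fourier sum `v(ξ) = (2π)^{−d/2} Σ_y e^{iξ·y/ε} u(y)` is bounded by
`(π²/(2ε^{2s}))^N (2π)^{−d/2} Σ_x |Δ_ε^N u(x)|`. -/
theorem discrete_nonstationary_phase
    (d N : ℕ) (ε s : ℝ) (hε : 0 < ε) (hs : 0 < s)
    (u : (Fin d → ℤ) → ℂ)
    (hu : Summable fun x => ‖u x‖)
    (hΔu : Summable fun x => ‖(latDiscLap^[N] u) x‖)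
    (ξ : Fin d → ℝ)
    (hbox : ∀ i, |ξ i| ≤ Real.pi)
    (hξ : ε ^ s ≤ Real.sqrt (∑ i, ξ i ^ 2)) :
    ‖((2 * Real.pi) ^ (-(d : ℝ) / 2) : ℝ) *
        ∑' y : Fin d → ℤ, Complex.exp (Complex.I * (∑ i, ξ i * (ε * y i)) / ε) * u y‖
      ≤ (Real.pi ^ 2 / (2 * ε ^ (2 * s))) ^ N * (2 * Real.pi) ^ (-(d : ℝ) / 2) *
          ∑' x : Fin d → ℤ, ‖(latDiscLap^[N] u) x‖ := by
  have hπ := Real.pi_pos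
  set c : ℝ := ∑ ν, (2 - 2 * Real.cos (ξ ν)) with hc
  have hε2s : (0:ℝ) < ε ^ (2*s) := Real.rpow_pos_of_pos hε _
  have hsq : ε ^ (2*s) = (ε ^ s)^2 := by
    rw [mul_comm, Real.rpow_mul hε.le, Real.rpow_two]
  have hsum_sq : ε ^ (2*s) ≤ ∑ i, ξ i ^ 2 := by
    rw [hsq]
    calc (ε^s)^2 ≤ (Real.sqrt (∑ i, ξ i ^ 2))^2 :=
          pow_le_pow_left₀ (Real.rpow_nonneg hε.le s) hξ 2
      _ = ∑ i, ξ i ^ 2 := Real.sq_sqrt (Finset.sum_nonneg fun i _ => sq_nonneg _)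
  have hcb : 2 / Real.pi^2 * ε^(2*s) ≤ c := by
    have hterm : ∀ i : Fin d, 2 / Real.pi^2 * ξ i ^ 2 ≤ 2 - 2 * Real.cos (ξ i) := by
      intro i
      have h := Real.cos_le_one_sub_mul_cos_sq (hbox i)
      have hπ2 : (0:ℝ) < Real.pi ^ 2 := by positivity
      have h3 : 2/Real.pi^2 * ξ i^2 * Real.pi^2 = 2 * ξ i^2 := by field_simp
      have h4 : 2/Real.pi^2 * ξ i^2 * Real.pi^2 ≤ (1 - Real.cos (ξ i)) * Real.pi^2 :=
        mul_le_mul_of_nonneg_right (by linarith) hπ2.le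
      rw [h3] at h4
      rw [div_mul_eq_mul_div, div_le_iff₀ hπ2]
      nlinarith [h4, sq_nonneg (ξ i)]
    calc 2 / Real.pi^2 * ε^(2*s) ≤ 2 / Real.pi^2 * ∑ i, ξ i ^ 2 := by
          apply mul_le_mul_of_nonneg_left hsum_sq (by positivity)
      _ = ∑ i, 2 / Real.pi^2 * ξ i ^ 2 := Finset.mul_sum _ _ _
      _ ≤ c := Finset.sum_le_sum fun i _ => hterm i
  have hc0 : 0 < c := lt_of_lt_of_le (by positivity) hcb
  have hK : c⁻¹ ≤ Real.pi^2 / (2 * ε^(2*s)) := by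
    have h1 : c⁻¹ ≤ (2 / Real.pi^2 * ε^(2*s))⁻¹ :=
      inv_anti₀ (by positivity) hcb
    refine h1.trans_eq ?_
    field_simp
  -- summability of iterates
  have hiter : ∀ k, Summable fun x => ‖(latDiscLap^[k] u) x‖ := by
    intro k
    induction k with
    | zero => simpa using hu
    | succ k ih => rw [Function.iterate_succ_apply']; exact summable_lap ih
  -- iterated summation by parts
  have hT : ∀ k, ∑' y, phaseFn ξ y * (latDiscLap^[k] u) y
      = (-(c:ℂ))^k * ∑' y, phaseFn ξ y * u y := by
    intro k
    induction k with
    | zero => simp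
    | succ k ih =>
        rw [Function.iterate_succ_apply', sbp ξ (hiter k), ih]
        ring
  have hnorm : ‖∑' y, phaseFn ξ y * (latDiscLap^[N] u) y‖
      = c^N * ‖∑' y, phaseFn ξ y * u y‖ := by
    rw [hT N, norm_mul, norm_pow, norm_neg, Complex.norm_real, Real.norm_eq_abs,
      abs_of_pos hc0]
  have hTN_le : ‖∑' y, phaseFn ξ y * (latDiscLap^[N] u) y‖
      ≤ ∑' x, ‖(latDiscLap^[N] u) x‖ := by
    have hsum : Summable fun y => ‖phaseFn ξ y * (latDiscLap^[N] u) y‖ := by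
      simp only [norm_mul, norm_phaseFn, one_mul]
      exact hiter N
    refine (norm_tsum_le_tsum_norm hsum).trans_eq ?_
    exact tsum_congr fun y => by rw [norm_mul, norm_phaseFn, one_mul]
  set SN : ℝ := ∑' x, ‖(latDiscLap^[N] u) x‖ with hSNdef
  have hSN : 0 ≤ SN := tsum_nonneg fun x => norm_nonneg _
  have hcle : c^N * ‖∑' y, phaseFn ξ y * u y‖ ≤ SN := hnorm ▸ hTN_le
  have hT0 : ‖∑' y, phaseFn ξ y * u y‖
      ≤ (Real.pi^2 / (2 * ε^(2*s)))^N * SN := by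
    have h1 : ‖∑' y, phaseFn ξ y * u y‖ ≤ (c⁻¹)^N * SN := by
      calc ‖∑' y, phaseFn ξ y * u y‖
          = (c^N)⁻¹ * (c^N * ‖∑' y, phaseFn ξ y * u y‖) := by
            field_simp
        _ ≤ (c^N)⁻¹ * SN := mul_le_mul_of_nonneg_left hcle (by positivity)
        _ = (c⁻¹)^N * SN := by rw [inv_pow]
    refine h1.trans (mul_le_mul_of_nonneg_right ?_ hSN)
    exact pow_le_pow_left₀ (inv_nonneg.2 hc0.le) hK N
  -- rewrite the statement tsum as the phase tsum
  have hph : (∑' y : Fin d → ℤ,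
        Complex.exp (Complex.I * (∑ i, ξ i * (ε * y i)) / ε) * u y)
      = ∑' y, phaseFn ξ y * u y := by
    refine tsum_congr fun y => ?_
    congr 1
    rw [phaseFn]
    congr 1
    have hεC : (ε : ℂ) ≠ 0 := by exact_mod_cast hε.ne'
    have h2 : (∑ i, ξ i * (ε * (y i:ℝ))) = ε * ∑ i, ξ i * (y i:ℝ) := by
      rw [Finset.mul_sum]
      exact Finset.sum_congr rfl fun i _ => by ring
    rw [show (∑ i, ξ i * (ε * ((y i : ℤ):ℝ))) = ε * ∑ i, ξ i * (y i:ℝ) from h2]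
    push_cast
    field_simp
  have hr : (0:ℝ) < (2 * Real.pi) ^ (-(d:ℝ)/2) :=
    Real.rpow_pos_of_pos (by positivity) _
  rw [hph, norm_mul, Complex.norm_real, Real.norm_eq_abs, abs_of_pos hr]
  calc (2 * Real.pi) ^ (-(d:ℝ)/2) * ‖∑' y, phaseFn ξ y * u y‖
      ≤ (2 * Real.pi) ^ (-(d:ℝ)/2) * ((Real.pi^2 / (2 * ε^(2*s)))^N * SN) :=
        mul_le_mul_of_nonneg_left hT0 hr.le
    _ = (Real.pi ^ 2 / (2 * ε ^ (2 * s))) ^ N * (2 * Real.pi) ^ (-(d:ℝ)/2) * SN := by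
        ring
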